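/- Under the hypotheses of the previous contact setting (ι_X θ = 1, ι_X dθ = 0, L = ∇ι_X + ι_X∇, Ψμ = ∇μ − (−1)^k(Lμ)∧θ for ι_X μ = 0), the operator Ψ commutes with wedging by powers of dθ: for every μ with ι_X μ = 0 and every j ∈ ℕ, Ψ(μ ∧ (dθ)^j) = (Ψμ) ∧ (dθ)^j. -/
import Mathlib


set_option maxHeartbeats 1000000

/-!
STATEMENT 9 (`Ψ(μ ∧ (dθ)^j) = (Ψμ) ∧ (dθ)^j`).
Same axiomatized contact setting as Statement 8: `Ω = Ω^•(M, E)` with the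
twisted differential `D = ∇` (`D² = 0`), the contraction `I = ι_X` (`I² = 0`),
right wedging operators `Wθ`, `Wdθ` by `θ` and `dθ`, and the sign operator
`eps = (-1)^deg`, subject to the graded relations encoding `ι_X θ = 1`,
`ι_X dθ = 0`, the Leibniz rule, `d(dθ) = 0`, `θ∧θ = 0`, `θ∧dθ = dθ∧θ` and the
parity of `eps`.  With `L = D∘I + I∘D` and `Ψ = D - Wθ∘L∘eps`
(`Ψμ = ∇μ - (-1)^k (Lμ)∧θ` on `k`-forms with `ι_X μ = 0`), the operator `Ψ`
commutes with wedging by powers of `dθ`: for every `μ` with `ι_X μ = 0` and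
every `j`, `Ψ((Wdθ^j) μ) = (Wdθ^j) (Ψ μ)`. -/
theorem stmt9 (K : Type*) [Field K] (Ω : Type*) [AddCommGroup Ω] [Module K Ω]
    (D I Wθ Wdθ eps : Module.End K Ω)
    (hDD : D * D = 0)
    (hII : I * I = 0)
    (hWθWθ : Wθ * Wθ = 0)
    (hWθWdθ : Wθ * Wdθ = Wdθ * Wθ)
    (hIWθ : I * Wθ = Wθ * I + eps)
    (hIWdθ : I * Wdθ = Wdθ * I)
    (hDWθ : D * Wθ = Wθ * D + Wdθ * eps)
    (hDWdθ : D * Wdθ = Wdθ * D)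
    (heps2 : eps * eps = 1)
    (hepsD : eps * D = -(D * eps))
    (hepsI : eps * I = -(I * eps))
    (hepsWθ : eps * Wθ = -(Wθ * eps))
    (hepsWdθ : eps * Wdθ = Wdθ * eps)
    (L Ψ : Module.End K Ω)
    (hL : L = D * I + I * D)
    (hΨ : Ψ = D - Wθ * L * eps) :
    ∀ μ : Ω, I μ = 0 → ∀ j : ℕ, Ψ ((Wdθ ^ j) μ) = (Wdθ ^ j) (Ψ μ) := by
  intro μ _ j
  have key : Commute Ψ Wdθ := by
    unfold Commute SemiconjBy
    subst hΨ hL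
    have cD : ∀ x : Module.End K Ω, D*(Wdθ*x)=Wdθ*(D*x) := fun x => by
      rw [← mul_assoc, hDWdθ, mul_assoc]
    have cI : ∀ x : Module.End K Ω, I*(Wdθ*x)=Wdθ*(I*x) := fun x => by
      rw [← mul_assoc, hIWdθ, mul_assoc]
    have cW : ∀ x : Module.End K Ω, Wθ*(Wdθ*x)=Wdθ*(Wθ*x) := fun x => by
      rw [← mul_assoc, hWθWdθ, mul_assoc]
    have ce : ∀ x : Module.End K Ω, eps*(Wdθ*x)=Wdθ*(eps*x) := fun x => by
      rw [← mul_assoc, hepsWdθ, mul_assoc]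
    simp only [sub_mul, mul_sub, add_mul, mul_add, mul_assoc, hepsWdθ, hDWdθ, hIWdθ,
      hWθWdθ, cD, cI, cW, ce]
  have h2 : Ψ * Wdθ ^ j = Wdθ ^ j * Ψ := (key.pow_right j)
  calc Ψ ((Wdθ ^ j) μ) = (Ψ * Wdθ ^ j) μ := rfl
    _ = (Wdθ ^ j * Ψ) μ := by rw [h2]
    _ = (Wdθ ^ j) (Ψ μ) := rfl
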